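/- arXiv:0808.3597 — 2 statements merged into one kernel-verified Lean document; each statement's English description precedes it below -/
import Mathlib

section
/- Let d be an odd prime and ρ a bipartite density supported in M such that for every k ≠ 0 and all n1, n2 ∈ Z_d, ρ_{n1 n2, (n1+k)(n2+k)} = c_{n2−n1}, where c_r (r ∈ Z_d) are real constants with c_r ≥ 0 for every r. If Σ_{r∈Z_d} c_r ≤ min over all diagonal entries of ρ, then ρ is separable. -/
open Matrix Kronecker
open scoped ComplexOrder

namespace GNAux

noncomputable def zeta (d : ℕ) : ℂ := Complex.exp (2 * Real.pi * Complex.I / d)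

noncomputable def chr (d : ℕ) (x : ZMod d) : ℂ := zeta d ^ x.val

variable {d : ℕ} [NeZero d]

lemma zeta_pow_card : zeta d ^ d = 1 :=
  (Complex.isPrimitiveRoot_exp d (NeZero.ne d)).pow_eq_one

lemma chr_add (x y : ZMod d) : chr d (x + y) = chr d x * chr d y := by
  unfold chr
  rw [ZMod.val_add, ← pow_add]
  conv_rhs => rw [show x.val + y.val = d * ((x.val + y.val) / d) + (x.val + y.val) % d from
    (Nat.div_add_mod _ d).symm]
  rw [pow_add, pow_mul, zeta_pow_card, one_pow, one_mul]

lemma chr_zero : chr d (0 : ZMod d) = 1 := by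
  unfold chr; rw [ZMod.val_zero, pow_zero]

lemma chr_norm (x : ZMod d) : ‖chr d x‖ = 1 := by
  unfold chr
  rw [norm_pow, Complex.norm_eq_one_of_pow_eq_one zeta_pow_card (NeZero.ne d), one_pow]

lemma chr_ne_zero (x : ZMod d) : chr d x ≠ 0 := by
  intro h; have := chr_norm (d := d) x; rw [h, norm_zero] at this; norm_num at this

lemma chr_mul_star (x : ZMod d) : chr d x * star (chr d x) = 1 := by
  rw [Complex.star_def, Complex.mul_conj]
  norm_cast
  rw [Complex.normSq_eq_norm_sq, chr_norm, one_pow]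

lemma star_chr (x : ZMod d) : star (chr d x) = chr d (-x) := by
  have h1 : chr d x * chr d (-x) = 1 := by
    rw [← chr_add]; simp [chr_zero]
  exact mul_left_cancel₀ (chr_ne_zero x) ((chr_mul_star x).trans h1.symm)

lemma chr_sum_univ (hd1 : 1 < d) : ∑ x : ZMod d, chr d x = 0 := by
  have : ∑ x : ZMod d, chr d x = ∑ j ∈ Finset.range d, zeta d ^ j := by
    refine Finset.sum_nbij' (fun x => x.val) (fun j => (j : ZMod d)) ?_ ?_ ?_ ?_ ?_
    · intro x _; exact Finset.mem_range.2 (ZMod.val_lt x)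
    · intro j _; exact Finset.mem_univ _
    · intro x _; exact ZMod.natCast_rightInverse x
    · intro j hj; exact ZMod.val_cast_of_lt (Finset.mem_range.1 hj)
    · intro x _; rfl
  rw [this]
  exact (Complex.isPrimitiveRoot_exp d (NeZero.ne d)).geom_sum_eq_zero hd1

lemma chr_line_sum (hd : d.Prime) (s : ZMod d) :
    ∑ a : ZMod d, chr d (a * s) = if s = 0 then (d : ℂ) else 0 := by
  haveI : Fact d.Prime := ⟨hd⟩
  by_cases hs : s = 0
  · simp [hs, chr_zero, Finset.card_univ, ZMod.card]
  · rw [if_neg hs]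
    have := Equiv.sum_comp (Equiv.mulRight₀ s hs) (chr d)
    simp only [Equiv.mulRight₀_apply] at this
    rw [this]
    exact chr_sum_univ hd.one_lt

lemma chr_double_sum (hd : d.Prime) (s t : ZMod d) :
    ∑ a : ZMod d, ∑ b : ZMod d, chr d (a * s + b * t) =
      (if s = 0 then (d : ℂ) else 0) * (if t = 0 then (d : ℂ) else 0) := by
  have h1 : ∀ a : ZMod d, ∑ b : ZMod d, chr d (a * s + b * t) =
      chr d (a * s) * (if t = 0 then (d : ℂ) else 0) := by
    intro a
    simp only [chr_add]
    rw [← Finset.mul_sum, chr_line_sum hd]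
  simp only [h1]
  rw [← Finset.sum_mul, chr_line_sum hd]

/-- outer product matrix `v vᴴ`. -/
noncomputable def outer (v : ZMod d → ℂ) : Matrix (ZMod d) (ZMod d) ℂ :=
  Matrix.of fun n m => v n * star (v m)

lemma outer_apply (v : ZMod d → ℂ) (n m : ZMod d) : outer v n m = v n * star (v m) := rfl

lemma outer_posSemidef (v : ZMod d → ℂ) : (outer v).PosSemidef := by
  have h : outer v = (Matrix.of fun (_ : Fin 1) n => star (v n))ᴴ *
      (Matrix.of fun (_ : Fin 1) n => star (v n)) := by
    ext n m
    simp [outer, Matrix.mul_apply, Matrix.conjTranspose_apply, Fin.sum_univ_one]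
  rw [h]
  exact Matrix.posSemidef_conjTranspose_mul_self _

lemma outer_trace (v : ZMod d → ℂ) : (outer v).trace = ∑ n, v n * star (v n) := by
  simp [Matrix.trace, outer, Matrix.diag]

/-- basis vector -/
def bvec (d : ℕ) (k : ZMod d) : ZMod d → ℂ := fun n => if n = k then 1 else 0

lemma outer_bvec_trace (k : ZMod d) : (outer (bvec d k)).trace = 1 := by
  rw [outer_trace]
  simp [bvec, apply_ite (star : ℂ → ℂ), Finset.sum_ite_eq']

/-- normalized vector -/
noncomputable def nv (d : ℕ) (w : ZMod d → ℂ) : ZMod d → ℂ :=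
  fun n => ((Real.sqrt d : ℂ))⁻¹ * w n

lemma sqrt_inv_sq : ((Real.sqrt d : ℂ))⁻¹ * ((Real.sqrt d : ℂ))⁻¹ = (d : ℂ)⁻¹ := by
  rw [← mul_inv]
  congr 1
  norm_cast
  rw [Real.mul_self_sqrt (Nat.cast_nonneg d)]

lemma outer_nv_apply (w : ZMod d → ℂ) (n m : ZMod d) :
    outer (nv d w) n m = (d : ℂ)⁻¹ * (w n * star (w m)) := by
  simp only [outer, nv, Matrix.of_apply, star_mul', Complex.star_def, map_inv₀,
    Complex.conj_ofReal]
  rw [show ((Real.sqrt d : ℂ))⁻¹ * w n * (((Real.sqrt d : ℂ))⁻¹ *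
      (starRingEnd ℂ) (w m)) = ((Real.sqrt d : ℂ))⁻¹ * ((Real.sqrt d : ℂ))⁻¹ *
      (w n * (starRingEnd ℂ) (w m)) from by ring, sqrt_inv_sq]

lemma outer_nv_trace (w : ZMod d → ℂ) (hw : ∀ n, w n * star (w n) = 1) :
    (outer (nv d w)).trace = 1 := by
  rw [Matrix.trace]
  have h : ∀ n : ZMod d, (outer (nv d w)).diag n = (d : ℂ)⁻¹ := by
    intro n
    rw [Matrix.diag, outer_nv_apply, hw, mul_one]
  rw [Finset.sum_congr rfl fun n _ => h n]
  rw [Finset.sum_const, Finset.card_univ, ZMod.card, nsmul_eq_mul]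
  exact mul_inv_cancel₀ (Nat.cast_ne_zero.2 (NeZero.ne d))

noncomputable def uu (d : ℕ) (a b : ZMod d) : ZMod d → ℂ :=
  fun n => chr d (a * n + b * n ^ 2)

noncomputable def vv (d : ℕ) (r a b : ZMod d) : ZMod d → ℂ :=
  fun n => chr d (-(a * (n - r)) - b * (n - r) ^ 2)

lemma uu_unimod (a b n : ZMod d) : uu d a b n * star (uu d a b n) = 1 := chr_mul_star _

lemma vv_unimod (r a b n : ZMod d) : vv d r a b n * star (vv d r a b n) = 1 := chr_mul_star _

noncomputable def SigF (d : ℕ) [NeZero d] :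
    (ZMod d × ZMod d) ⊕ (ZMod d × ZMod d × ZMod d) → Matrix (ZMod d) (ZMod d) ℂ :=
  Sum.elim (fun i => outer (bvec d i.1)) (fun x => outer (nv d (uu d x.2.1 x.2.2)))

noncomputable def TauF (d : ℕ) [NeZero d] :
    (ZMod d × ZMod d) ⊕ (ZMod d × ZMod d × ZMod d) → Matrix (ZMod d) (ZMod d) ℂ :=
  Sum.elim (fun i => outer (bvec d i.2)) (fun x => outer (nv d (vv d x.1 x.2.1 x.2.2)))

noncomputable def WF (d : ℕ) [NeZero d] (ρ : Matrix (ZMod d × ZMod d) (ZMod d × ZMod d) ℂ)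
    (c : ZMod d → ℝ) : (ZMod d × ZMod d) ⊕ (ZMod d × ZMod d × ZMod d) → ℝ :=
  Sum.elim (fun i => (ρ i i).re - ∑ r, c r) (fun x => c x.1)

end GNAux

/-- A bipartite density on `C^d ⊗ C^d` is separable if it is a finite convex
combination of Kronecker products of `d×d` densities. -/
def IsSeparableState {d : ℕ} [NeZero d]
    (ρ : Matrix (ZMod d × ZMod d) (ZMod d × ZMod d) ℂ) : Prop :=
  ∃ (n : ℕ) (w : Fin n → ℝ) (σ τ : Fin n → Matrix (ZMod d) (ZMod d) ℂ),
    (∀ i, 0 ≤ w i) ∧ (∑ i, w i = 1) ∧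
    (∀ i, (σ i).PosSemidef ∧ (σ i).trace = 1) ∧
    (∀ i, (τ i).PosSemidef ∧ (τ i).trace = 1) ∧
    ρ = ∑ i, (w i : ℂ) • (σ i ⊗ₖ τ i)

/-- For `d` an odd prime and `ρ` a bipartite density
supported in `M` with `ρ_{n1 n2,(n1+k)(n2+k)} = c_{n2−n1}` for `k ≠ 0`, where
the real constants `c_r` are all nonnegative: if `Σ_r c_r` is at most every
diagonal entry of `ρ`, then `ρ` is separable. -/
theorem general_nonneg_case_separable (d : ℕ) [NeZero d] (hd : d.Prime) (hodd : Odd d)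
    (ρ : Matrix (ZMod d × ZMod d) (ZMod d × ZMod d) ℂ)
    (hρ : ρ.PosSemidef ∧ ρ.trace = 1)
    (hsupp : ∀ j1 j2 k1 k2 : ZMod d, j2 - j1 ≠ k2 - k1 → ρ (j1, j2) (k1, k2) = 0)
    (c : ZMod d → ℝ) (hc : ∀ r, 0 ≤ c r)
    (hval : ∀ k : ZMod d, k ≠ 0 → ∀ n1 n2 : ZMod d,
        ρ (n1, n2) (n1 + k, n2 + k) = (c (n2 - n1) : ℂ))
    (hdiag : ∀ i : ZMod d × ZMod d, (∑ r : ZMod d, c r) ≤ (ρ i i).re) :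
    IsSeparableState ρ := by
  classical
  obtain ⟨hPSD, htr⟩ := hρ
  haveI : Fact d.Prime := ⟨hd⟩
  have hdC : (d : ℂ) ≠ 0 := Nat.cast_ne_zero.2 (NeZero.ne d)
  have h2 : (2 : ZMod d) ≠ 0 := by
    intro h
    have h2' : ((2 : ℕ) : ZMod d) = 0 := by exact_mod_cast h
    rw [ZMod.natCast_eq_zero_iff] at h2'
    have hle := Nat.le_of_dvd (by norm_num) h2'
    have hge := hd.two_le
    have hdeq : d = 2 := le_antisymm hle hge
    rw [hdeq] at hodd
    exact (by decide : ¬ Odd 2) hodd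
  let ι := (ZMod d × ZMod d) ⊕ (ZMod d × ZMod d × ZMod d)
  let eqv : Fin (Fintype.card ι) ≃ ι := (Fintype.equivFin ι).symm
  refine ⟨Fintype.card ι, fun i => GNAux.WF d ρ c (eqv i), fun i => GNAux.SigF d (eqv i),
    fun i => GNAux.TauF d (eqv i), ?_, ?_, ?_, ?_, ?_⟩
  · intro i
    rcases heq : eqv i with p | x <;>
      simp only [heq, GNAux.WF, Sum.elim_inl, Sum.elim_inr]
    · exact sub_nonneg.2 (hdiag p)
    · exact hc x.1
  · rw [Equiv.sum_comp eqv (GNAux.WF d ρ c)]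
    rw [Fintype.sum_sum_type]
    simp only [GNAux.WF, Sum.elim_inl, Sum.elim_inr]
    have hre : ∑ p : ZMod d × ZMod d, (ρ p p).re = 1 := by
      have h1 : (Matrix.trace ρ).re = 1 := by rw [htr]; exact Complex.one_re
      rw [Matrix.trace] at h1
      rw [Complex.re_sum] at h1
      exact h1
    have hL : ∑ x : ZMod d × ZMod d × ZMod d, c x.1 = (d * d : ℝ) * ∑ r, c r := by
      rw [Fintype.sum_prod_type]
      simp only [Finset.sum_const, Finset.card_univ, Fintype.card_prod, ZMod.card,
        nsmul_eq_mul]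
      rw [← Finset.mul_sum]
      push_cast
      ring
    have hS : ∑ _p : ZMod d × ZMod d, (∑ r, c r) = (d * d : ℝ) * ∑ r, c r := by
      simp only [Finset.sum_const, Finset.card_univ, Fintype.card_prod, ZMod.card,
        nsmul_eq_mul]
      push_cast
      ring
    rw [Finset.sum_sub_distrib, hre, hL, hS]
    ring
  · intro i
    rcases heq : eqv i with p | x <;>
      simp only [heq, GNAux.SigF, Sum.elim_inl, Sum.elim_inr]
    · exact ⟨GNAux.outer_posSemidef _, GNAux.outer_bvec_trace _⟩
    · exact ⟨GNAux.outer_posSemidef _,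
        GNAux.outer_nv_trace _ fun n => GNAux.uu_unimod _ _ _⟩
  · intro i
    rcases heq : eqv i with p | x <;>
      simp only [heq, GNAux.TauF, Sum.elim_inl, Sum.elim_inr]
    · exact ⟨GNAux.outer_posSemidef _, GNAux.outer_bvec_trace _⟩
    · exact ⟨GNAux.outer_posSemidef _,
        GNAux.outer_nv_trace _ fun n => GNAux.vv_unimod _ _ _ _⟩
  · have key : ρ = ∑ x : ι, (GNAux.WF d ρ c x : ℂ) • (GNAux.SigF d x ⊗ₖ GNAux.TauF d x) := by
      rw [Fintype.sum_sum_type]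
      ext ⟨n1, n2⟩ ⟨m1, m2⟩
      rw [Matrix.add_apply, Matrix.sum_apply, Matrix.sum_apply]
      simp only [Matrix.smul_apply, Matrix.kroneckerMap_apply, smul_eq_mul,
        GNAux.WF, GNAux.SigF, GNAux.TauF, Sum.elim_inl, Sum.elim_inr]
      have hA : (∑ x : ZMod d × ZMod d,
          (((ρ x x).re - ∑ r : ZMod d, c r : ℝ) : ℂ) *
            (GNAux.outer (GNAux.bvec d x.1) n1 m1 * GNAux.outer (GNAux.bvec d x.2) n2 m2)) =
          if n1 = m1 ∧ n2 = m2 then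
            (((ρ (n1, n2) (n1, n2)).re - ∑ r : ZMod d, c r : ℝ) : ℂ) else 0 := by
        rw [Finset.sum_eq_single_of_mem (n1, n2) (Finset.mem_univ _) ?_]
        · have e1 : GNAux.outer (GNAux.bvec d n1) n1 m1 = if m1 = n1 then 1 else 0 := by
            simp [GNAux.outer_apply, GNAux.bvec, apply_ite (star : ℂ → ℂ)]
          have e2 : GNAux.outer (GNAux.bvec d n2) n2 m2 = if m2 = n2 then 1 else 0 := by
            simp [GNAux.outer_apply, GNAux.bvec, apply_ite (star : ℂ → ℂ)]
          rw [e1, e2]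
          by_cases h1 : n1 = m1 <;> by_cases h2 : n2 = m2
          · simp [h1, h2]
          · simp [h1, h2, Ne.symm h2]
          · simp [h1, h2, Ne.symm h1]
          · simp [h1, h2, Ne.symm h1, Ne.symm h2]
        · intro p _ hp
          have hor : p.1 ≠ n1 ∨ p.2 ≠ n2 := by
            by_contra hcon
            push_neg at hcon
            exact hp (Prod.ext_iff.2 ⟨hcon.1, hcon.2⟩)
          rcases hor with h | h <;>
            simp [GNAux.outer_apply, GNAux.bvec, Ne.symm h]
      have hmul4 : ∀ x1 x2 y1 y2 : ZMod d,
          ((d : ℂ)⁻¹ * (GNAux.chr d x1 * GNAux.chr d x2)) *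
            ((d : ℂ)⁻¹ * (GNAux.chr d y1 * GNAux.chr d y2)) =
          (d : ℂ)⁻¹ * (d : ℂ)⁻¹ * GNAux.chr d (x1 + x2 + y1 + y2) := by
        intro x1 x2 y1 y2
        simp only [GNAux.chr_add]
        ring
      have hterm : ∀ r a b : ZMod d,
          GNAux.outer (GNAux.nv d (GNAux.uu d a b)) n1 m1 *
            GNAux.outer (GNAux.nv d (GNAux.vv d r a b)) n2 m2 =
          (d : ℂ)⁻¹ * (d : ℂ)⁻¹ *
            GNAux.chr d ((a * n1 + b * n1 ^ 2) + (-(a * m1 + b * m1 ^ 2)) +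
              (-(a * (n2 - r)) - b * (n2 - r) ^ 2) +
              (-(-(a * (m2 - r)) - b * (m2 - r) ^ 2))) := by
        intro r a b
        rw [GNAux.outer_nv_apply, GNAux.outer_nv_apply]
        simp only [GNAux.uu, GNAux.vv, GNAux.star_chr]
        exact hmul4 _ _ _ _
      have hchr : ∀ r a b : ZMod d,
          (a * n1 + b * n1 ^ 2) + (-(a * m1 + b * m1 ^ 2)) +
              (-(a * (n2 - r)) - b * (n2 - r) ^ 2) +
              (-(-(a * (m2 - r)) - b * (m2 - r) ^ 2))
          = a * (n1 - m1 - n2 + m2) +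
              b * (n1 ^ 2 - m1 ^ 2 + (m2 - r) ^ 2 - (n2 - r) ^ 2) := by
        intro r a b; ring
      have hB : (∑ x : ZMod d × ZMod d × ZMod d, ((c x.1 : ℝ) : ℂ) *
            (GNAux.outer (GNAux.nv d (GNAux.uu d x.2.1 x.2.2)) n1 m1 *
              GNAux.outer (GNAux.nv d (GNAux.vv d x.1 x.2.1 x.2.2)) n2 m2)) =
          ∑ r : ZMod d, ((c r : ℝ) : ℂ) *
            ((if n1 - m1 - n2 + m2 = 0 then (1 : ℂ) else 0) *
             (if n1 ^ 2 - m1 ^ 2 + (m2 - r) ^ 2 - (n2 - r) ^ 2 = 0 then (1 : ℂ) else 0)) := by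
        rw [Fintype.sum_prod_type]
        refine Finset.sum_congr rfl fun r _ => ?_
        dsimp only
        rw [← Finset.mul_sum]
        congr 1
        rw [Fintype.sum_prod_type]
        dsimp only
        simp only [hterm, hchr]
        simp only [← Finset.mul_sum]
        rw [GNAux.chr_double_sum hd]
        split_ifs <;> field_simp <;> simp
      rw [hA, hB]
      by_cases hs : n1 - m1 - n2 + m2 = 0
      · by_cases hk : n1 = m1
        · subst hk
          have hm : n2 = m2 := by linear_combination -hs
          subst hm
          rw [if_pos ⟨rfl, rfl⟩]
          have hsum : (∑ r : ZMod d, ((c r : ℝ) : ℂ) *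
              ((if n1 - n1 - n2 + n2 = 0 then (1 : ℂ) else 0) *
               (if n1 ^ 2 - n1 ^ 2 + (n2 - r) ^ 2 - (n2 - r) ^ 2 = 0 then (1 : ℂ) else 0))) =
              ((∑ r : ZMod d, c r : ℝ) : ℂ) := by
            push_cast
            refine Finset.sum_congr rfl fun r _ => ?_
            rw [if_pos (by ring), if_pos (by ring)]
            ring
          rw [hsum]
          have hreal : (((ρ (n1, n2) (n1, n2)).re : ℝ) : ℂ) = ρ (n1, n2) (n1, n2) :=
            Complex.conj_eq_iff_re.1 (hPSD.isHermitian.apply (n1, n2) (n1, n2))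
          push_cast
          linear_combination -hreal
        · rw [if_neg fun h => hk h.1]
          have hm2 : m2 = n2 - (n1 - m1) := by linear_combination hs
          subst hm2
          have hcond : ∀ r : ZMod d,
              (n1 ^ 2 - m1 ^ 2 + (n2 - (n1 - m1) - r) ^ 2 - (n2 - r) ^ 2 = 0) ↔
                r = n2 - n1 := by
            intro r
            constructor
            · intro h
              have h' : (2 * (n1 - m1)) * (r - (n2 - n1)) = 0 := by linear_combination h
              rcases mul_eq_zero.1 h' with h'' | h''
              · rcases mul_eq_zero.1 h'' with h3 | h3
                · exact absurd h3 h2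
                · exact absurd (sub_eq_zero.1 h3) hk
              · exact sub_eq_zero.1 h''
            · intro h; subst h; ring
          have h1 : ∀ r : ZMod d, ((c r : ℝ) : ℂ) *
              ((if n1 - m1 - n2 + (n2 - (n1 - m1)) = 0 then (1 : ℂ) else 0) *
               (if n1 ^ 2 - m1 ^ 2 + (n2 - (n1 - m1) - r) ^ 2 - (n2 - r) ^ 2 = 0
                  then (1 : ℂ) else 0)) =
              if r = n2 - n1 then ((c r : ℝ) : ℂ) else 0 := by
            intro r
            rw [if_pos (by ring : n1 - m1 - n2 + (n2 - (n1 - m1)) = 0), one_mul,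
              if_congr (hcond r) rfl rfl, mul_ite, mul_one, mul_zero]
          rw [Finset.sum_congr rfl fun r _ => h1 r,
            Finset.sum_ite_eq' Finset.univ (n2 - n1) fun r => ((c r : ℝ) : ℂ),
            if_pos (Finset.mem_univ _), zero_add]
          have hne : m1 - n1 ≠ 0 := sub_ne_zero.2 (Ne.symm hk)
          have hv := hval (m1 - n1) hne n1 n2
          rw [show n1 + (m1 - n1) = m1 from by ring,
            show n2 + (m1 - n1) = n2 - (n1 - m1) from by ring] at hv
          exact hv
      · rw [if_neg fun h => hs (by rw [h.1, h.2]; ring)]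
        rw [Finset.sum_eq_zero fun r _ => by rw [if_neg hs, zero_mul, mul_zero]]
        rw [zero_add]
        exact hsupp n1 n2 m1 m2 fun h => hs (by linear_combination -h)
    exact key.trans (Equiv.sum_comp eqv _).symm
end

section
/- Let d be an odd prime, x : Z_d × Z_d → ℂ a function, and ρ a bipartite density supported in M such that for every k ≠ 0 and all n, r ∈ Z_d, ρ_{n(n+r), (n+k)(n+r+k)} = x(n,r) · conj(x(n+k,r)). If every diagonal entry of ρ is at least Σ_{n,r ∈ Z_d} |x(n,r)|², then ρ is separable. -/
open Matrix Kronecker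
open scoped ComplexOrder

set_option linter.unusedSectionVars false

namespace Sep19
open Complex Finset



variable {ι : Type*} [Fintype ι] [DecidableEq ι]

noncomputable def outer (v : ι → ℂ) : Matrix ι ι ℂ :=
  Matrix.of fun a b => v a * (starRingEnd ℂ) (v b)

lemma outer_apply (v : ι → ℂ) (a b : ι) : outer v a b = v a * (starRingEnd ℂ) (v b) := rfl

lemma outer_posSemidef (v : ι → ℂ) : (outer v).PosSemidef := by
  rw [posSemidef_iff_dotProduct_mulVec]
  constructor
  · ext a b
    simp [outer, conjTranspose_apply, mul_comm]
  · intro y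
    set z : ℂ := ∑ a, (starRingEnd ℂ) (y a) * v a with hz
    have hsz : (star z : ℂ) = ∑ a, (starRingEnd ℂ) (v a) * y a := by
      rw [hz, star_sum]
      exact Finset.sum_congr rfl fun a _ => by simp [mul_comm]
    have key : dotProduct (star y) (outer v *ᵥ y) = z * star z := by
      rw [hsz, hz, Finset.sum_mul_sum]
      simp only [dotProduct, mulVec, dotProduct, outer, Matrix.of_apply, Pi.star_apply,
        Finset.mul_sum, RCLike.star_def]
      apply Finset.sum_congr rfl; intro a _
      apply Finset.sum_congr rfl; intro b _
      ring
    rw [key]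
    exact mul_star_self_nonneg z

lemma outer_trace (v : ι → ℂ) : (outer v).trace = ∑ a, (Complex.normSq (v a) : ℂ) := by
  simp [Matrix.trace, outer, Matrix.diag, mul_comm, Complex.normSq_eq_conj_mul_self]

lemma posSemidef_real_smul {M : Matrix ι ι ℂ} (hM : M.PosSemidef) {c : ℝ} (hc : 0 ≤ c) :
    ((c : ℂ) • M).PosSemidef := by
  rw [posSemidef_iff_dotProduct_mulVec]
  constructor
  · rw [IsHermitian, conjTranspose_smul, hM.1]
    congr 1
    simp
  · intro y
    rw [smul_mulVec, dotProduct_smul, smul_eq_mul]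
    exact mul_nonneg (by exact_mod_cast hc) (hM.dotProduct_mulVec_nonneg y)

variable {d : ℕ} [NeZero d]

noncomputable def e : ZMod d → ℂ := fun t => ZMod.stdAddChar t

lemma e_add (a b : ZMod d) : e (a + b) = e a * e b := AddChar.map_add_eq_mul _ _ _

lemma conj_e (t : ZMod d) : (starRingEnd ℂ) (e t) = e (-t) := by
  show (starRingEnd ℂ) (ZMod.stdAddChar t) = ZMod.stdAddChar (-t)
  rw [ZMod.stdAddChar_apply, ZMod.stdAddChar_apply, AddChar.map_neg_eq_inv,
    ← Circle.coe_inv_eq_conj]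

lemma normSq_e (t : ZMod d) : Complex.normSq (e t) = 1 := by
  show Complex.normSq ((ZMod.toCircle t : Circle) : ℂ) = 1
  exact Circle.normSq_coe _

lemma sum_e (c : ZMod d) : ∑ t : ZMod d, e (c * t) = if c = 0 then (d : ℂ) else 0 := by
  split_ifs with h
  · simp [h, e]
  · exact AddChar.sum_eq_zero_of_ne_one (ZMod.isPrimitive_stdAddChar d h)

lemma two_ne_zero' (hd : d.Prime) (hodd : Odd d) : (2 : ZMod d) ≠ 0 := by
  haveI : Fact d.Prime := ⟨hd⟩
  intro h
  have h2 : ((2 : ℕ) : ZMod d) = 0 := by exact_mod_cast h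
  have hdvd : d ∣ 2 := (ZMod.natCast_eq_zero_iff 2 d).mp h2
  have : d = 2 := (Nat.prime_dvd_prime_iff_eq hd Nat.prime_two).mp hdvd
  rw [this] at hodd
  exact (by decide : ¬ Odd 2) hodd

lemma key_pair (hd : d.Prime) (hodd : Odd d) (a b a' b' : ZMod d) :
    (a - b - a' + b' = 0 ∧ a * a - b * b - a' * a' + b' * b' = 0) ↔
      ((a = b ∧ a' = b') ∨ (a = a' ∧ b = b')) := by
  haveI : Fact d.Prime := ⟨hd⟩
  constructor
  · rintro ⟨h1, h2⟩
    have ht : a - a' = b - b' := by linear_combination h1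
    rcases eq_or_ne (a - a') 0 with h | h
    · right
      have hb : b - b' = 0 := by rw [← ht]; exact h
      exact ⟨by linear_combination h, by linear_combination hb⟩
    · left
      have h2'' : (a - a') * (a + a') = (b - b') * (b + b') := by linear_combination h2
      rw [← ht] at h2''
      have hsum : a + a' = b + b' := mul_left_cancel₀ h h2''
      have h2ab : (2 : ZMod d) * a = 2 * b := by linear_combination hsum + ht
      have hab : a = b := mul_left_cancel₀ (two_ne_zero' hd hodd) h2ab
      exact ⟨hab, by linear_combination hsum - hab⟩
  · rintro (⟨h1, h2⟩ | ⟨h1, h2⟩) <;> subst h1 <;> subst h2 <;> constructor <;> ring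


variable {d : ℕ} [NeZero d]

/-- the vector on the first factor -/
noncomputable def Vv (x : ZMod d → ZMod d → ℂ) (p : ZMod d × ZMod d × ZMod d) : ZMod d → ℂ :=
  fun n => x n p.1 * e (n * p.2.1 + n * n * p.2.2)

/-- the vector on the second factor -/
noncomputable def Uv (p : ZMod d × ZMod d × ZMod d) : ZMod d → ℂ :=
  fun s => (starRingEnd ℂ) (e ((s - p.1) * p.2.1 + (s - p.1) * (s - p.1) * p.2.2))

/-- a standard basis vector -/
noncomputable def δv (i : ZMod d) : ZMod d → ℂ := fun a => if a = i then 1 else 0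

lemma outer_delta_apply (i a b : ZMod d) :
    outer (δv i) a b = if a = i ∧ b = i then 1 else 0 := by
  simp only [outer_apply, δv, apply_ite (starRingEnd ℂ), _root_.map_one, _root_.map_zero]
  split_ifs <;> simp_all

lemma outer_delta_trace (i : ZMod d) : (outer (δv i)).trace = 1 := by
  rw [outer_trace]
  simp only [δv, apply_ite Complex.normSq, Complex.normSq_one, Complex.normSq_zero]
  simp only [apply_ite (fun r : ℝ => (r : ℂ)), Complex.ofReal_one, Complex.ofReal_zero,
    Finset.sum_ite_eq', Finset.mem_univ, if_true]

lemma isSeparable_of_fintype {ι : Type} [Fintype ι]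
    (ρ : Matrix (ZMod d × ZMod d) (ZMod d × ZMod d) ℂ)
    (w : ι → ℝ) (σ τ : ι → Matrix (ZMod d) (ZMod d) ℂ)
    (hw : ∀ i, 0 ≤ w i) (hsum : ∑ i, w i = 1)
    (hσ : ∀ i, (σ i).PosSemidef ∧ (σ i).trace = 1)
    (hτ : ∀ i, (τ i).PosSemidef ∧ (τ i).trace = 1)
    (heq : ρ = ∑ i, (w i : ℂ) • (σ i ⊗ₖ τ i)) : IsSeparableState ρ := by
  obtain e := Fintype.equivFin ι
  refine ⟨Fintype.card ι, w ∘ e.symm, σ ∘ e.symm, τ ∘ e.symm, fun i => hw _, ?_,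
    fun i => hσ _, fun i => hτ _, ?_⟩
  · rw [← hsum]; exact Equiv.sum_comp e.symm w
  · rw [heq]; exact (Equiv.sum_comp e.symm fun i => (w i : ℂ) • (σ i ⊗ₖ τ i)).symm


lemma normSq_Vv (x : ZMod d → ZMod d → ℂ) (p : ZMod d × ZMod d × ZMod d) (n : ZMod d) :
    Complex.normSq (Vv x p n) = Complex.normSq (x n p.1) := by
  rw [Vv, Complex.normSq_mul, normSq_e, mul_one]

lemma Vv_trace (x : ZMod d → ZMod d → ℂ) (p : ZMod d × ZMod d × ZMod d) :
    (outer (Vv x p)).trace = ((∑ n, Complex.normSq (x n p.1) : ℝ) : ℂ) := by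
  rw [outer_trace]
  push_cast
  exact Finset.sum_congr rfl fun n _ => by rw [normSq_Vv]

lemma Uv_trace (p : ZMod d × ZMod d × ZMod d) : (outer (Uv p)).trace = (d : ℂ) := by
  rw [outer_trace]
  have : ∀ s : ZMod d, Complex.normSq (Uv p s) = 1 := fun s => by
    rw [Uv, Complex.normSq_conj, normSq_e]
  simp only [this]
  rw [Finset.sum_const, Finset.card_univ, ZMod.card]
  simp

lemma e_quad (E1 E2 E3 E4 c1 c2 : ZMod d) (h1 : E1 - E2 - E3 + E4 = c1 + c2) :
    e E1 * e (-E2) * (e (-E3) * e E4) = e c1 * e c2 := by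
  rw [← e_add, ← e_add, ← e_add, ← e_add]
  congr 1
  linear_combination h1

lemma term_eq (x : ZMod d → ZMod d → ℂ) (r θ φ j1 j2 k1 k2 : ZMod d) :
    (outer (Vv x (r, θ, φ)) ⊗ₖ outer (Uv (r, θ, φ))) (j1, j2) (k1, k2)
      = x j1 r * (starRingEnd ℂ) (x k1 r) *
          (e ((j1 - k1 - (j2 - r) + (k2 - r)) * θ) *
           e ((j1 * j1 - k1 * k1 - (j2 - r) * (j2 - r) + (k2 - r) * (k2 - r)) * φ)) := by
  have h := e_quad (d := d) (j1 * θ + j1 * j1 * φ) (k1 * θ + k1 * k1 * φ)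
      ((j2 - r) * θ + (j2 - r) * (j2 - r) * φ) ((k2 - r) * θ + (k2 - r) * (k2 - r) * φ)
      ((j1 - k1 - (j2 - r) + (k2 - r)) * θ)
      ((j1 * j1 - k1 * k1 - (j2 - r) * (j2 - r) + (k2 - r) * (k2 - r)) * φ) (by ring)
  simp only [Matrix.kroneckerMap_apply, outer_apply, Vv, Uv, _root_.map_mul, conj_e,
    Complex.conj_conj]
  rw [← h]
  ring_nf

lemma sum2 (a : ℂ) (c1 c2 : ZMod d) :
    (∑ θ : ZMod d, ∑ φ : ZMod d, a * (e (c1 * θ) * e (c2 * φ)))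
      = a * ((if c1 = 0 then (d : ℂ) else 0) * (if c2 = 0 then (d : ℂ) else 0)) := by
  simp only [← Finset.mul_sum]
  rw [← Finset.sum_mul, sum_e, sum_e]

lemma entry_sum (x : ZMod d → ZMod d → ℂ) (j1 j2 k1 k2 : ZMod d) :
    (∑ p : ZMod d × ZMod d × ZMod d, (outer (Vv x p) ⊗ₖ outer (Uv p)) (j1, j2) (k1, k2))
      = ∑ r : ZMod d, (x j1 r * (starRingEnd ℂ) (x k1 r)) *
          ((if j1 - k1 - (j2 - r) + (k2 - r) = 0 then (d : ℂ) else 0) *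
           (if j1 * j1 - k1 * k1 - (j2 - r) * (j2 - r) + (k2 - r) * (k2 - r) = 0
              then (d : ℂ) else 0)) := by
  rw [Fintype.sum_prod_type]
  apply Finset.sum_congr rfl
  intro r _
  rw [Fintype.sum_prod_type, ← sum2]
  apply Finset.sum_congr rfl; intro θ _
  apply Finset.sum_congr rfl; intro φ _
  exact term_eq x r θ φ j1 j2 k1 k2

lemma delta_sum_entry (c : ZMod d × ZMod d → ℂ) (j k : ZMod d × ZMod d) :
    (∑ i : ZMod d × ZMod d, c i • (outer (δv i.1) ⊗ₖ outer (δv i.2))) j k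
      = if k = j then c j else 0 := by
  rw [Matrix.sum_apply]
  rw [Finset.sum_eq_single j]
  · rw [Matrix.smul_apply, Matrix.kroneckerMap_apply, outer_delta_apply, outer_delta_apply]
    by_cases hk : k = j
    · subst hk
      simp
    · rw [if_neg hk]
      have hdisj : ¬(k.1 = j.1) ∨ ¬(k.2 = j.2) := by
        by_contra hcon
        push_neg at hcon
        exact hk (Prod.ext hcon.1 hcon.2)
      rcases hdisj with h | h
      · rw [if_neg (by tauto)]
        simp
      · rw [if_neg (fun hc => h hc.2) (c := j.2 = j.2 ∧ k.2 = j.2)]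
        simp
  · intro i _ hij
    rw [Matrix.smul_apply, Matrix.kroneckerMap_apply, outer_delta_apply, outer_delta_apply]
    have hdisj : ¬(j.1 = i.1) ∨ ¬(j.2 = i.2) := by
      by_contra hcon
      push_neg at hcon
      exact hij (Prod.ext hcon.1 hcon.2).symm
    rcases hdisj with h | h
    · rw [if_neg (fun hc => h hc.1)]
      simp
    · rw [if_neg (fun hc => h hc.1) (c := j.2 = i.2 ∧ k.2 = i.2)]
      simp
  · simp

end Sep19

open Sep19 Complex Finset in
/-- For `d` an odd prime, `x : Z_d × Z_d → ℂ`, and `ρ` a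
bipartite density supported in `M` with product entries
`ρ_{n(n+r),(n+k)(n+r+k)} = x(n,r) conj(x(n+k,r))` for `k ≠ 0`:
if every diagonal entry of `ρ` is at least `Σ_{n,r} |x(n,r)|²`, then `ρ` is
separable. -/
theorem product_entries_separable (d : ℕ) [NeZero d] (hd : d.Prime) (hodd : Odd d)
    (x : ZMod d → ZMod d → ℂ)
    (ρ : Matrix (ZMod d × ZMod d) (ZMod d × ZMod d) ℂ)
    (hρ : ρ.PosSemidef ∧ ρ.trace = 1)
    (hsupp : ∀ j1 j2 k1 k2 : ZMod d, j2 - j1 ≠ k2 - k1 → ρ (j1, j2) (k1, k2) = 0)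
    (hval : ∀ k : ZMod d, k ≠ 0 → ∀ n r : ZMod d,
        ρ (n, n + r) (n + k, n + r + k) = x n r * (starRingEnd ℂ) (x (n + k) r))
    (hdiag : ∀ i : ZMod d × ZMod d,
        (∑ n : ZMod d, ∑ r : ZMod d, Complex.normSq (x n r)) ≤ (ρ i i).re) :
    IsSeparableState ρ := by
  haveI : Fact d.Prime := ⟨hd⟩
  obtain ⟨hpsd, htr⟩ := hρ
  have hdC : (d : ℂ) ≠ 0 := Nat.cast_ne_zero.mpr (NeZero.ne d)
  have hdR : (0 : ℝ) < d := Nat.cast_pos.mpr (Nat.pos_of_ne_zero (NeZero.ne d))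
  set T : ZMod d → ℝ := fun n => ∑ r, Complex.normSq (x n r) with hT
  set t : ZMod d → ℝ := fun r => ∑ n, Complex.normSq (x n r) with ht
  set S : ℝ := ∑ n : ZMod d, ∑ r : ZMod d, Complex.normSq (x n r) with hS
  have hTnn : ∀ n, 0 ≤ T n := fun n => Finset.sum_nonneg fun _ _ => Complex.normSq_nonneg _
  have htnn : ∀ r, 0 ≤ t r := fun r => Finset.sum_nonneg fun _ _ => Complex.normSq_nonneg _
  have hST : S = ∑ n : ZMod d, T n := rfl
  have hSt : S = ∑ r : ZMod d, t r := Finset.sum_comm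
  have hTS : ∀ n, T n ≤ S := by
    intro n
    rw [hST]
    exact Finset.single_le_sum (f := T) (fun i _ => hTnn i) (Finset.mem_univ n)
  set w : (ZMod d × ZMod d × ZMod d) ⊕ (ZMod d × ZMod d) → ℝ :=
    Sum.elim (fun p => t p.1 / d) (fun i => (ρ i i).re - T i.1) with hw
  set σm : (ZMod d × ZMod d × ZMod d) ⊕ (ZMod d × ZMod d) → Matrix (ZMod d) (ZMod d) ℂ :=
    Sum.elim
      (fun p => if t p.1 = 0 then outer (δv 0) else ((t p.1 : ℂ))⁻¹ • outer (Vv x p))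
      (fun i => outer (δv i.1)) with hσm
  set τm : (ZMod d × ZMod d × ZMod d) ⊕ (ZMod d × ZMod d) → Matrix (ZMod d) (ZMod d) ℂ :=
    Sum.elim (fun p => ((d : ℂ))⁻¹ • outer (Uv p)) (fun i => outer (δv i.2)) with hτm
  apply isSeparable_of_fintype ρ w σm τm
  · -- weights nonneg
    rintro (p | i)
    · exact div_nonneg (htnn _) hdR.le
    · simp only [hw, Sum.elim_inr]
      have h0 := hdiag i
      linarith [hTS i.1]
  · -- weights sum to one
    rw [Fintype.sum_sum_type]
    have h1 : ∑ p : ZMod d × ZMod d × ZMod d, w (Sum.inl p) = d * S := by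
      simp only [hw, Sum.elim_inl]
      rw [Fintype.sum_prod_type]
      have hc : ∀ r : ZMod d, (∑ _q : ZMod d × ZMod d, t r / d) = d * t r := by
        intro r
        rw [Finset.sum_const, Finset.card_univ, Fintype.card_prod, ZMod.card, nsmul_eq_mul]
        push_cast
        field_simp
      rw [Finset.sum_congr rfl fun r _ => hc r, ← Finset.mul_sum, ← hSt]
    have h2 : ∑ i : ZMod d × ZMod d, w (Sum.inr i) = 1 - d * S := by
      simp only [hw, Sum.elim_inr]
      rw [Finset.sum_sub_distrib]
      have h21 : ∑ i : ZMod d × ZMod d, (ρ i i).re = 1 := by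
        have : (ρ.trace).re = 1 := by rw [htr]; simp
        rw [show ρ.trace = ∑ i, ρ i i from rfl, Complex.re_sum] at this
        exact this
      have h22 : ∑ i : ZMod d × ZMod d, T i.1 = d * S := by
        rw [Fintype.sum_prod_type]
        have : ∀ i1 : ZMod d, (∑ _i2 : ZMod d, T i1) = d * T i1 := by
          intro i1
          rw [Finset.sum_const, Finset.card_univ, ZMod.card, nsmul_eq_mul]
        rw [Finset.sum_congr rfl fun i1 _ => this i1, ← Finset.mul_sum, ← hST]
      rw [h21, h22]
    rw [h1, h2]
    ring
  · -- σ are densities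
    rintro (p | i)
    · simp only [hσm, Sum.elim_inl]
      by_cases h : t p.1 = 0
      · rw [if_pos h]
        exact ⟨outer_posSemidef _, outer_delta_trace _⟩
      · rw [if_neg h]
        have htC : ((t p.1 : ℝ) : ℂ) ≠ 0 := Complex.ofReal_ne_zero.mpr h
        constructor
        · rw [show ((t p.1 : ℝ) : ℂ)⁻¹ = (((t p.1)⁻¹ : ℝ) : ℂ) by push_cast; ring]
          exact posSemidef_real_smul (outer_posSemidef _) (inv_nonneg.mpr (htnn _))
        · rw [Matrix.trace_smul, Vv_trace, ht]
          simp only [smul_eq_mul]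
          rw [inv_mul_cancel₀]
          exact_mod_cast htC
    · simp only [hσm, Sum.elim_inr]
      exact ⟨outer_posSemidef _, outer_delta_trace _⟩
  · -- τ are densities
    rintro (p | i)
    · simp only [hτm, Sum.elim_inl]
      constructor
      · rw [show ((d : ℕ) : ℂ)⁻¹ = ((((d : ℕ) : ℝ)⁻¹ : ℝ) : ℂ) by push_cast; ring]
        exact posSemidef_real_smul (outer_posSemidef _) (inv_nonneg.mpr hdR.le)
      · rw [Matrix.trace_smul, Uv_trace]
        simp only [smul_eq_mul]
        rw [inv_mul_cancel₀ hdC]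
    · simp only [hτm, Sum.elim_inr]
      exact ⟨outer_posSemidef _, outer_delta_trace _⟩
  · -- the decomposition identity
    rw [Fintype.sum_sum_type]
    have hinl : ∀ p : ZMod d × ZMod d × ZMod d,
        ((w (Sum.inl p) : ℝ) : ℂ) • (σm (Sum.inl p) ⊗ₖ τm (Sum.inl p))
          = ((d : ℂ) * d)⁻¹ • (outer (Vv x p) ⊗ₖ outer (Uv p)) := by
      intro p
      simp only [hw, hσm, hτm, Sum.elim_inl]
      by_cases h : t p.1 = 0
      · rw [if_pos h]
        have hx : ∀ n, x n p.1 = 0 := by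
          intro n
          have := (Finset.sum_eq_zero_iff_of_nonneg
            (fun i _ => Complex.normSq_nonneg (x i p.1))).mp h n (Finset.mem_univ n)
          exact Complex.normSq_eq_zero.mp this
        have hV : outer (Vv x p) = 0 := by
          ext a b
          simp [outer_apply, Vv, hx]
        rw [hV, h]
        simp
      · rw [if_neg h]
        have htC : ((t p.1 : ℝ) : ℂ) ≠ 0 := Complex.ofReal_ne_zero.mpr h
        rw [Matrix.smul_kronecker, Matrix.kronecker_smul, smul_smul, smul_smul]
        congr 1
        push_cast
        field_simp
    have h1 : (∑ p : ZMod d × ZMod d × ZMod d,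
        ((w (Sum.inl p) : ℝ) : ℂ) • (σm (Sum.inl p) ⊗ₖ τm (Sum.inl p)))
          = ((d : ℂ) * d)⁻¹ • ∑ p : ZMod d × ZMod d × ZMod d,
              (outer (Vv x p) ⊗ₖ outer (Uv p)) := by
      rw [Finset.smul_sum]
      exact Finset.sum_congr rfl fun p _ => hinl p
    rw [h1]
    simp only [hw, hσm, hτm, Sum.elim_inr]
    ext ⟨j1, j2⟩ ⟨k1, k2⟩
    rw [Matrix.add_apply, Matrix.smul_apply, Matrix.sum_apply]
    rw [entry_sum x j1 j2 k1 k2]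
    rw [delta_sum_entry (fun i => (((ρ i i).re - T i.1 : ℝ) : ℂ)) (j1, j2) (k1, k2)]
    have hprod : ∀ r : ZMod d,
        ((if j1 - k1 - (j2 - r) + (k2 - r) = 0 then (d : ℂ) else 0) *
         (if j1 * j1 - k1 * k1 - (j2 - r) * (j2 - r) + (k2 - r) * (k2 - r) = 0
            then (d : ℂ) else 0))
          = if ((j1 = k1 ∧ j2 - r = k2 - r) ∨ (j1 = j2 - r ∧ k1 = k2 - r))
              then (d : ℂ) * d else 0 := by
      intro r
      have hpq := key_pair hd hodd j1 k1 (j2 - r) (k2 - r)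
      rcases Classical.em ((j1 = k1 ∧ j2 - r = k2 - r) ∨ (j1 = j2 - r ∧ k1 = k2 - r)) with hC | hC
      · obtain ⟨h1, h2⟩ := hpq.mpr hC
        rw [if_pos hC, if_pos h1, if_pos h2]
      · rw [if_neg hC]
        by_cases h1 : j1 - k1 - (j2 - r) + (k2 - r) = 0
        · rw [if_pos h1, if_neg (fun h2 => hC (hpq.mp ⟨h1, h2⟩)), mul_zero]
        · rw [if_neg h1, zero_mul]
    simp only [hprod]
    by_cases hjk : k1 = j1 ∧ k2 = j2
    · obtain ⟨e1, e2⟩ := hjk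
      rw [e1, e2]
      rw [if_pos rfl]
      have hsum : (∑ r : ZMod d, (x j1 r * (starRingEnd ℂ) (x j1 r)) *
          (if ((j1 = j1 ∧ j2 - r = j2 - r) ∨ (j1 = j2 - r ∧ j1 = j2 - r))
            then (d : ℂ) * d else 0)) = ((d : ℂ) * d) * ((T j1 : ℝ) : ℂ) := by
        rw [hT]
        push_cast
        rw [Finset.mul_sum]
        apply Finset.sum_congr rfl
        intro r _
        rw [if_pos (Or.inl ⟨rfl, rfl⟩), Complex.mul_conj]
        ring
      rw [hsum, smul_eq_mul, inv_mul_cancel_left₀ (mul_ne_zero hdC hdC)]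
      have hre : ((ρ (j1, j2) (j1, j2)).re : ℂ) = ρ (j1, j2) (j1, j2) :=
        Complex.conj_eq_iff_re.mp (hpsd.1.apply (j1, j2) (j1, j2))
      conv_lhs => rw [← hre]
      push_cast
      ring
    · rw [if_neg (fun hc => hjk ⟨congrArg Prod.fst hc, congrArg Prod.snd hc⟩)]
      by_cases h12 : j2 - j1 = k2 - k1
      · have hcond : ∀ r : ZMod d,
            (((j1 = k1 ∧ j2 - r = k2 - r) ∨ (j1 = j2 - r ∧ k1 = k2 - r))) ↔ r = j2 - j1 := by
          intro r
          constructor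
          · rintro (⟨ha, hb⟩ | ⟨ha, hb⟩)
            · exfalso
              have : j2 = k2 := by linear_combination hb
              exact hjk ⟨ha.symm, this.symm⟩
            · linear_combination ha
          · intro hr
            right
            constructor
            · linear_combination hr
            · rw [hr]
              linear_combination h12
        have hk1 : k1 - j1 ≠ 0 := by
          intro hzero
          have hkj : k1 = j1 := by linear_combination hzero
          have : j2 = k2 := by rw [hkj] at h12; linear_combination h12
          exact hjk ⟨hkj, this.symm⟩
        have hv := hval (k1 - j1) hk1 j1 (j2 - j1)
        rw [show j1 + (j2 - j1) = j2 by ring, show j1 + (k1 - j1) = k1 by ring,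
          show j2 + (k1 - j1) = k2 by linear_combination h12] at hv
        have hiter : ∀ r : ZMod d, (x j1 r * (starRingEnd ℂ) (x k1 r)) *
            (if ((j1 = k1 ∧ j2 - r = k2 - r) ∨ (j1 = j2 - r ∧ k1 = k2 - r))
              then (d : ℂ) * d else 0)
            = if r = j2 - j1 then x j1 r * (starRingEnd ℂ) (x k1 r) * ((d : ℂ) * d) else 0 := by
          intro r
          by_cases hr : r = j2 - j1
          · rw [if_pos ((hcond r).mpr hr), if_pos hr]
          · rw [if_neg (fun hc => hr ((hcond r).mp hc)), if_neg hr, mul_zero]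
        rw [Finset.sum_congr rfl fun r _ => hiter r,
          Finset.sum_ite_eq' Finset.univ (j2 - j1)
            (fun r => x j1 r * (starRingEnd ℂ) (x k1 r) * ((d : ℂ) * d)),
          if_pos (Finset.mem_univ _), hv, smul_eq_mul]
        field_simp
        rw [add_zero]
      · have hzero : ∀ r : ZMod d,
            (if ((j1 = k1 ∧ j2 - r = k2 - r) ∨ (j1 = j2 - r ∧ k1 = k2 - r))
              then (d : ℂ) * d else 0) = 0 := by
          intro r
          rw [if_neg]
          rintro (⟨ha, hb⟩ | ⟨ha, hb⟩)
          · exact hjk ⟨ha.symm, by linear_combination -hb⟩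
          · exact h12 (by linear_combination hb - ha)
        simp only [hzero, mul_zero, Finset.sum_const_zero, smul_zero, add_zero]
        exact hsupp j1 j2 k1 k2 h12
end
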